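/- Let n be a squarefree positive integer and define λ₂(n) = lcm over primes p dividing n of (p²-1). Let k = λ₂(n) / gcd(λ₂(n), n²-1). Then k · ∏_{p ∣ n} gcd(p²-1, n²-1) divides ∏_{p ∣ n} (p²-1), where the products run over the distinct prime divisors of n. -/

import Mathlib

lemma key_lcm_div (a b m : ℕ) (ha : 0 < a) (hb : 0 < b) (hm : 0 < m) :
    Nat.lcm a b / Nat.gcd (Nat.lcm a b) m ∣ (a / Nat.gcd a m) * (b / Nat.gcd b m) := by
  have hl : 0 < Nat.lcm a b := Nat.pos_of_ne_zero (Nat.lcm_ne_zero ha.ne' hb.ne')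
  have hga : Nat.gcd a m ∣ a := Nat.gcd_dvd_left _ _
  have hgb : Nat.gcd b m ∣ b := Nat.gcd_dvd_left _ _
  have hgl : Nat.gcd (Nat.lcm a b) m ∣ Nat.lcm a b := Nat.gcd_dvd_left _ _
  have hqa : 0 < a / Nat.gcd a m := Nat.div_pos (Nat.le_of_dvd ha hga) (Nat.gcd_pos_of_pos_left _ ha)
  have hqb : 0 < b / Nat.gcd b m := Nat.div_pos (Nat.le_of_dvd hb hgb) (Nat.gcd_pos_of_pos_left _ hb)
  have hql : 0 < Nat.lcm a b / Nat.gcd (Nat.lcm a b) m :=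
    Nat.div_pos (Nat.le_of_dvd hl hgl) (Nat.gcd_pos_of_pos_left _ hl)
  rw [← Nat.factorization_le_iff_dvd hql.ne' (Nat.mul_ne_zero hqa.ne' hqb.ne')]
  intro q
  have h1 := Nat.factorization_div hgl
  have h2 := Nat.factorization_div hga
  have h3 := Nat.factorization_div hgb
  rw [h1, Nat.factorization_mul hqa.ne' hqb.ne', h2, h3]
  simp only [Finsupp.coe_tsub, Finsupp.coe_add, Pi.sub_apply, Pi.add_apply]
  rw [Nat.factorization_gcd hl.ne' hm.ne', Nat.factorization_gcd ha.ne' hm.ne',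
    Nat.factorization_gcd hb.ne' hm.ne', Nat.factorization_lcm ha.ne' hb.ne']
  simp only [Finsupp.inf_apply, Finsupp.sup_apply]
  omega

lemma finset_lcm_div (s : Finset ℕ) (f : ℕ → ℕ) (m : ℕ) (hm : 0 < m)
    (hf : ∀ p ∈ s, 0 < f p) :
    s.lcm f / Nat.gcd (s.lcm f) m ∣ ∏ p ∈ s, (f p / Nat.gcd (f p) m) := by
  induction s using Finset.induction_on with
  | empty => simp [Nat.lcm]
  | insert a s ha ih =>
    have hfa : 0 < f a := hf a (Finset.mem_insert_self a s)
    have hfs : ∀ p ∈ s, 0 < f p := fun p hp => hf p (Finset.mem_insert_of_mem hp)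
    have hL : 0 < s.lcm f := by
      refine Nat.pos_of_ne_zero fun h => ?_
      rw [Finset.lcm_eq_zero_iff] at h
      obtain ⟨p, hp, hp0⟩ := h
      exact absurd hp0 (hfs p hp).ne'
    rw [Finset.lcm_insert, Finset.prod_insert ha]
    have hkey := key_lcm_div (f a) (s.lcm f) m hfa hL hm
    have : Nat.lcm (f a) (s.lcm f) = lcm (f a) (s.lcm f) := rfl
    rw [this] at hkey
    exact hkey.trans (Nat.mul_dvd_mul_left _ (ih hfs))

theorem stmt_3 (n : ℕ) (hn : 1 < n) (hsf : Squarefree n)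
    (lam2 : ℕ) (hlam2 : lam2 = n.primeFactors.lcm (fun p => p ^ 2 - 1))
    (k : ℕ) (hk : k = lam2 / Nat.gcd lam2 (n ^ 2 - 1)) :
    k * ∏ p ∈ n.primeFactors, Nat.gcd (p ^ 2 - 1) (n ^ 2 - 1) ∣
      ∏ p ∈ n.primeFactors, (p ^ 2 - 1) := by
  have hm : 0 < n ^ 2 - 1 := by have : 1 < n ^ 2 := by nlinarith
                                omega
  have hf : ∀ p ∈ n.primeFactors, 0 < p ^ 2 - 1 := by
    intro p hp
    have h2 := (Nat.prime_of_mem_primeFactors hp).two_le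
    have : 1 < p ^ 2 := by nlinarith
    omega
  have hdvd := finset_lcm_div n.primeFactors (fun p => p ^ 2 - 1) (n ^ 2 - 1) hm hf
  rw [← hlam2, ← hk] at hdvd
  calc k * ∏ p ∈ n.primeFactors, Nat.gcd (p ^ 2 - 1) (n ^ 2 - 1)
      ∣ (∏ p ∈ n.primeFactors, ((p ^ 2 - 1) / Nat.gcd (p ^ 2 - 1) (n ^ 2 - 1))) *
        ∏ p ∈ n.primeFactors, Nat.gcd (p ^ 2 - 1) (n ^ 2 - 1) :=
        Nat.mul_dvd_mul_right hdvd _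
    _ = ∏ p ∈ n.primeFactors, (p ^ 2 - 1) := by
        rw [← Finset.prod_mul_distrib]
        exact Finset.prod_congr rfl fun p hp =>
          Nat.div_mul_cancel (Nat.gcd_dvd_left _ _)
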